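/- Let Ω ⊆ ℝ³ be an open set and ω ∈ ℂ with ω ≠ 0. Let ε, μ : Ω → ℂ^{3×3} be of class C¹, E, H : Ω → ℂ³ of class C¹, J_e : Ω → ℂ³ of class C¹ and J_m : Ω → ℂ³ continuous, and assume the time-harmonic Maxwell system holds pointwise on Ω: curl H = iωεE + J_e and curl E = −iωμH + J_m. Then for every k ∈ {1,2,3} and every compactly supported test function φ ∈ C²_c(Ω;ℂ) there holds the very weak identity ∫_Ω E_k div(εᵀ ∇φ̄) dx = ∫_Ω ((∂_k ε)E − ε(e_k × (J_m − iωμH)) − (i/ω) e_k div J_e) · ∇φ̄ dx, where φ̄ denotes the complex conjugate of φ, dx is Lebesgue measure on ℝ³ and a·b = Σ_j a_j b_j (no conjugation). -/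

import Mathlib

open Matrix MeasureTheory

noncomputable section

/-- Partial derivative of a scalar function in the j-th coordinate direction. -/
def pd3 (j : Fin 3) (f : (Fin 3 → ℝ) → ℂ) (x : Fin 3 → ℝ) : ℂ :=
  fderiv ℝ f x (Pi.single j 1)

/-- Divergence of a vector field. -/
def vdiv (F : (Fin 3 → ℝ) → Fin 3 → ℂ) (x : Fin 3 → ℝ) : ℂ :=
  ∑ j : Fin 3, pd3 j (fun y => F y j) x

/-- Curl of a vector field. -/
def vcurl (F : (Fin 3 → ℝ) → Fin 3 → ℂ) (x : Fin 3 → ℝ) : Fin 3 → ℂ :=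
  ![pd3 1 (fun y => F y 2) x - pd3 2 (fun y => F y 1) x,
    pd3 2 (fun y => F y 0) x - pd3 0 (fun y => F y 2) x,
    pd3 0 (fun y => F y 1) x - pd3 1 (fun y => F y 0) x]

/-- Gradient of a scalar function. -/
def grad3 (u : (Fin 3 → ℝ) → ℂ) (x : Fin 3 → ℝ) : Fin 3 → ℂ := fun j => pd3 j u x

/-- Cross product on ℂ³. -/
def cross3 (a b : Fin 3 → ℂ) : Fin 3 → ℂ :=
  ![a 1 * b 2 - a 2 * b 1, a 2 * b 0 - a 0 * b 2, a 0 * b 1 - a 1 * b 0]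

/-- The k-th standard basis vector of ℝ³ viewed in ℂ³. -/
def e3 (k : Fin 3) : Fin 3 → ℂ := Pi.single k 1

/-- Entrywise partial derivative of a matrix field in the k-th direction. -/
def mpd3 (k : Fin 3) (a : (Fin 3 → ℝ) → Matrix (Fin 3) (Fin 3) ℂ) (x : Fin 3 → ℝ) :
    Matrix (Fin 3) (Fin 3) ℂ :=
  Matrix.of fun i j => pd3 k (fun y => a y i j) x

section Helpers

open Topology Manifold

abbrev V3 := Fin 3 → ℝ

lemma pd3_congr {j : Fin 3} {f g : V3 → ℂ} {x : V3} (h : f =ᶠ[nhds x] g) :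
    pd3 j f x = pd3 j g x := by unfold pd3; rw [h.fderiv_eq]

lemma contDiff_pd3 {j : Fin 3} {f : V3 → ℂ} (hf : ContDiff ℝ 2 f) :
    ContDiff ℝ 1 (pd3 j f) := by
  have h1 : ContDiff ℝ 1 (fderiv ℝ f) := hf.fderiv_right (by norm_num)
  exact h1.clm_apply contDiff_const

lemma continuous_pd3 {j : Fin 3} {f : V3 → ℂ} (hf : ContDiff ℝ 1 f) :
    Continuous (pd3 j f) := by
  have h1 : Continuous (fderiv ℝ f) := hf.continuous_fderiv one_ne_zero
  exact (ContinuousLinearMap.apply ℝ ℂ (Pi.single j 1 : V3)).continuous.comp h1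

lemma pd3_mul {j : Fin 3} {f g : V3 → ℂ} {x : V3} (hf : DifferentiableAt ℝ f x)
    (hg : DifferentiableAt ℝ g x) :
    pd3 j (fun y => f y * g y) x = f x * pd3 j g x + pd3 j f x * g x := by
  unfold pd3
  rw [fderiv_fun_mul hf hg]
  simp [mul_comm]

lemma pd3_sum {j : Fin 3} {f : Fin 3 → V3 → ℂ} {x : V3}
    (hf : ∀ i, DifferentiableAt ℝ (f i) x) :
    pd3 j (fun y => ∑ i, f i y) x = ∑ i, pd3 j (f i) x := by
  unfold pd3
  rw [fderiv_fun_sum (fun i _ => hf i)]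
  simp

lemma pd3_const_mul {j : Fin 3} {f : V3 → ℂ} {x : V3} (hf : DifferentiableAt ℝ f x) (c : ℂ) :
    pd3 j (fun y => c * f y) x = c * pd3 j f x := by
  unfold pd3; rw [fderiv_const_mul hf]; simp

lemma pd3_sub {j : Fin 3} {f g : V3 → ℂ} {x : V3} (hf : DifferentiableAt ℝ f x)
    (hg : DifferentiableAt ℝ g x) :
    pd3 j (fun y => f y - g y) x = pd3 j f x - pd3 j g x := by
  unfold pd3; rw [fderiv_fun_sub hf hg]; simp

lemma pd3_comm {ψ : V3 → ℂ} (hψ : ContDiff ℝ 2 ψ) (j k : Fin 3) (x : V3) :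
    pd3 j (pd3 k ψ) x = pd3 k (pd3 j ψ) x := by
  have hsym := (hψ.contDiffAt (x := x)).isSymmSndFDerivAt (by simp)
  have hd : DifferentiableAt ℝ (fderiv ℝ ψ) x :=
    ((hψ.fderiv_right (by norm_num)).differentiable one_ne_zero) x
  unfold pd3
  rw [fderiv_clm_apply hd (differentiableAt_const _),
    fderiv_clm_apply hd (differentiableAt_const _)]
  simp [hsym.eq]

lemma hcs_pd3 {j : Fin 3} {f : V3 → ℂ} (hcs : HasCompactSupport f) :
    HasCompactSupport (pd3 j f) :=
  HasCompactSupport.intro hcs (fun x hx => by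
    have h : f =ᶠ[𝓝 x] 0 := notMem_tsupport_iff_eventuallyEq.mp hx
    rw [pd3, h.fderiv_eq, show (0 : V3 → ℂ) = fun _ => 0 from rfl, fderiv_fun_const]; rfl)

lemma pd3_eq_zero_of_nmem {j : Fin 3} {f : V3 → ℂ} {x : V3} (hx : x ∉ tsupport f) :
    pd3 j f x = 0 := by
  have h : f =ᶠ[𝓝 x] 0 := notMem_tsupport_iff_eventuallyEq.mp hx
  rw [pd3, h.fderiv_eq, show (0 : V3 → ℂ) = fun _ => 0 from rfl, fderiv_fun_const]; rfl

lemma pd3_congrOn {j : Fin 3} {f g : V3 → ℂ} {U : Set V3} (hU : IsOpen U) {x : V3}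
    (hx : x ∈ U) (h : ∀ y ∈ U, f y = g y) : pd3 j f x = pd3 j g x :=
  pd3_congr (Filter.eventuallyEq_of_mem (hU.mem_nhds hx) h)

lemma pd3_zero_on {j : Fin 3} {f : V3 → ℂ} {U : Set V3} (hU : IsOpen U) {x : V3}
    (hx : x ∈ U) (h : ∀ y ∈ U, f y = 0) : pd3 j f x = 0 := by
  rw [pd3_congrOn hU hx (g := fun _ => (0:ℂ)) h, pd3, fderiv_fun_const]; rfl

lemma integrable_cs {f : V3 → ℂ} (hf : Continuous f) {K : Set V3} (hK : IsCompact K)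
    (h0 : ∀ x ∉ K, f x = 0) : Integrable f :=
  hf.integrable_of_hasCompactSupport (HasCompactSupport.intro hK h0)

lemma ibp (j : Fin 3) {f g : V3 → ℂ} (hf : ContDiff ℝ 1 f) (hg : ContDiff ℝ 1 g)
    (hcs : HasCompactSupport f) :
    ∫ x, f x * pd3 j g x = - ∫ x, pd3 j f x * g x := by
  have hpd : HasCompactSupport (pd3 j f) := hcs_pd3 hcs
  have h1 : Integrable (fun x => pd3 j f x * g x) :=
    ((continuous_pd3 hf).mul hg.continuous).integrable_of_hasCompactSupport
      hpd.mul_right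
  have h2 : Integrable (fun x => f x * pd3 j g x) :=
    (hf.continuous.mul (continuous_pd3 hg)).integrable_of_hasCompactSupport hcs.mul_right
  have h3 : Integrable (fun x => f x * g x) :=
    (hf.continuous.mul hg.continuous).integrable_of_hasCompactSupport hcs.mul_right
  exact integral_mul_fderiv_eq_neg_fderiv_mul_of_integrable h1 h2 h3
    (fun x _ => hf.differentiable one_ne_zero x) (fun x _ => hg.differentiable one_ne_zero x)

lemma exists_cutoff {K Ω : Set V3} (hK : IsCompact K) (hΩ : IsOpen Ω) (hKΩ : K ⊆ Ω) :
    ∃ χ : V3 → ℝ, ContDiff ℝ ((⊤:ℕ∞):WithTop ℕ∞) χ ∧ HasCompactSupport χ ∧ tsupport χ ⊆ Ω ∧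
      ∃ U : Set V3, IsOpen U ∧ K ⊆ U ∧ U ⊆ Ω ∧ ∀ x ∈ U, χ x = 1 := by
  obtain ⟨L, hLc, hKL, hLΩ⟩ := exists_compact_between hK hΩ hKΩ
  obtain ⟨χ, h1, h0, -⟩ := exists_contMDiffMap_one_nhds_of_subset_interior 𝓘(ℝ, V3) (n := (⊤:ℕ∞))
    hK.isClosed hKL
  have hχ : ContDiff ℝ ((⊤:ℕ∞):WithTop ℕ∞) (χ : V3 → ℝ) := by
    rw [← contMDiff_iff_contDiff]; exact χ.contMDiff
  have hsupp : tsupport (χ : V3 → ℝ) ⊆ L :=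
    closure_minimal (fun x hx => by_contra fun hxL => hx (h0 x hxL)) hLc.isClosed
  obtain ⟨U, hUo, hKU, hU1⟩ := eventually_nhdsSet_iff_exists.mp h1
  refine ⟨χ, hχ, HasCompactSupport.of_support_subset_isCompact hLc
    (subset_trans subset_closure hsupp), hsupp.trans hLΩ,
    U ∩ Ω, hUo.inter hΩ, Set.subset_inter hKU hKΩ, Set.inter_subset_right,
    fun x hx => hU1 x hx.1⟩

lemma cutoff_smul {χ : V3 → ℝ} {f : V3 → ℂ} {Ω : Set V3} (hΩ : IsOpen Ω)
    (hχ : ContDiff ℝ ((⊤:ℕ∞):WithTop ℕ∞) χ) (hsupp : tsupport χ ⊆ Ω)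
    (hf : ContDiffOn ℝ 1 f Ω) :
    ContDiff ℝ 1 (fun x => χ x • f x) := by
  rw [contDiff_iff_contDiffAt]
  intro x
  by_cases hx : x ∈ Ω
  · exact ((hχ.of_le (by
      rw [show (1 : WithTop ℕ∞) = ((1:ℕ∞) : WithTop ℕ∞) from rfl]
      exact WithTop.coe_le_coe.mpr le_top)).contDiffAt).smul
      (hf.contDiffAt (hΩ.mem_nhds hx))
  · have h0 : χ =ᶠ[𝓝 x] 0 := notMem_tsupport_iff_eventuallyEq.mp (fun hc => hx (hsupp hc))
    have h : (fun x => χ x • f x) =ᶠ[𝓝 x] (fun _ => (0:ℂ)) :=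
      h0.mono (fun y hy => by simp only [Pi.zero_apply] at hy; simp [hy])
    exact (contDiffAt_const (c := (0:ℂ))).congr_of_eventuallyEq h

lemma cutoff_cs {χ : V3 → ℝ} {f : V3 → ℂ} (hχ : HasCompactSupport χ) :
    HasCompactSupport (fun x => χ x • f x) :=
  HasCompactSupport.intro hχ (fun x hx => by
    have h : χ x = 0 := image_eq_zero_of_notMem_tsupport hx
    simp [h])

lemma curl_ibp {u : V3 → ℂ} (hu : ContDiff ℝ 2 u) (hucs : HasCompactSupport u)
    {Hc : Fin 3 → V3 → ℂ} (hHc : ∀ i, ContDiff ℝ 1 (Hc i))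
    (hHcs : ∀ i, HasCompactSupport (Hc i)) :
    ∑ j, ∫ x, pd3 j u x * vcurl (fun y i => Hc i y) x j = 0 := by
  have hu1 : ContDiff ℝ 1 u := hu.of_le one_le_two
  have hpdu : ∀ a : Fin 3, ContDiff ℝ 1 (pd3 a u) := fun a => contDiff_pd3 hu
  have hival : ∀ (a b c : Fin 3), Integrable (fun x => pd3 a u x * pd3 b (Hc c) x) :=
    fun a b c => ((continuous_pd3 hu1).mul
      (continuous_pd3 (hHc c))).integrable_of_hasCompactSupport (hcs_pd3 hucs).mul_right
  have hibp : ∀ (a b c : Fin 3),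
      ∫ x, pd3 a u x * pd3 b (Hc c) x = - ∫ x, pd3 b (pd3 a u) x * Hc c x :=
    fun a b c => ibp b (hpdu a) (hHc c) (hcs_pd3 hucs)
  have hcomm : ∀ (a b c : Fin 3),
      ∫ x, pd3 b (pd3 a u) x * Hc c x = ∫ x, pd3 a (pd3 b u) x * Hc c x := by
    intro a b c
    refine integral_congr_ae (.of_forall fun x => ?_)
    show pd3 b (pd3 a u) x * Hc c x = pd3 a (pd3 b u) x * Hc c x
    rw [pd3_comm hu]
  have hsplit : ∀ (j a b c d : Fin 3), (∫ x, pd3 j u x * (pd3 a (Hc b) x - pd3 c (Hc d) x))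
      = (∫ x, pd3 j u x * pd3 a (Hc b) x) - ∫ x, pd3 j u x * pd3 c (Hc d) x := by
    intro j a b c d
    simp only [mul_sub]
    exact integral_sub (hival j a b) (hival j c d)
  rw [Fin.sum_univ_three]
  simp only [vcurl, Matrix.cons_val_zero, Matrix.cons_val_one, Matrix.head_cons,
    Matrix.cons_val_two, Matrix.tail_cons]
  rw [hsplit 0 1 2 2 1, hsplit 1 2 0 0 2, hsplit 2 0 1 1 0,
    hibp 0 1 2, hibp 0 2 1, hibp 1 2 0, hibp 1 0 2, hibp 2 0 1, hibp 2 1 0,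
    hcomm 1 0 2, hcomm 2 0 1, hcomm 2 1 0]
  ring

lemma div_curl_ae {Ω : Set V3} (hΩ : IsOpen Ω) {H F : V3 → Fin 3 → ℂ}
    (hH : ∀ i, ContDiffOn ℝ 1 (fun x => H x i) Ω)
    (hF : ∀ i, ContDiffOn ℝ 1 (fun x => F x i) Ω)
    (hFH : ∀ x ∈ Ω, F x = vcurl H x) :
    ∀ᵐ x, x ∈ Ω → vdiv F x = 0 := by
  have hcont : ContinuousOn (vdiv F) Ω := by
    have h : ∀ j : Fin 3, ContinuousOn (pd3 j (fun y => F y j)) Ω := by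
      intro j
      have h1 : ContinuousOn (fderiv ℝ (fun y => F y j)) Ω :=
        (hF j).continuousOn_fderiv_of_isOpen hΩ le_rfl
      exact (ContinuousLinearMap.apply ℝ ℂ
        (Pi.single j 1 : V3)).continuous.comp_continuousOn h1
    exact continuousOn_finset_sum _ (fun j _ => h j)
  apply hΩ.ae_eq_zero_of_integral_contDiff_smul_eq_zero
    (hcont.locallyIntegrableOn hΩ.measurableSet)
  intro g hg hgc hgs
  obtain ⟨χ, hχ, hχcs, hχΩ, U, hUo, hKU, hUΩ, hU1⟩ := exists_cutoff hgc hΩ hgs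
  set gC : V3 → ℂ := fun x => (g x : ℂ) with hgCdef
  have hgC : ContDiff ℝ 2 gC :=
    Complex.ofRealCLM.contDiff.comp (hg.of_le (by
      rw [show (2 : WithTop ℕ∞) = ((2:ℕ∞) : WithTop ℕ∞) from rfl]
      exact WithTop.coe_le_coe.mpr le_top))
  have hgC1 : ContDiff ℝ 1 gC := hgC.of_le one_le_two
  have hgCsupp : tsupport gC ⊆ tsupport g :=
    closure_mono (fun x hx => by
      simp only [Function.mem_support, gC] at hx ⊢; exact_mod_cast hx)
  have hgCcs : HasCompactSupport gC := HasCompactSupport.intro hgc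
    (fun x hx => by simp [gC, image_eq_zero_of_notMem_tsupport hx])
  set Ht : Fin 3 → V3 → ℂ := fun i => fun x => χ x • H x i with hHtdef
  set Ft : Fin 3 → V3 → ℂ := fun j => fun x => χ x • F x j with hFtdef
  have hHt1 : ∀ i, ContDiff ℝ 1 (Ht i) := fun i => cutoff_smul hΩ hχ hχΩ (hH i)
  have hFt1 : ∀ j, ContDiff ℝ 1 (Ft j) := fun j => cutoff_smul hΩ hχ hχΩ (hF j)
  have hHtcs : ∀ i, HasCompactSupport (Ht i) := fun i => cutoff_cs hχcs
  have hgsU : tsupport g ⊆ U := hKU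
  have hpt : ∀ x, g x • vdiv F x = ∑ j : Fin 3, gC x * pd3 j (Ft j) x := by
    intro x
    by_cases hx : x ∈ U
    · have h : ∀ j : Fin 3, pd3 j (Ft j) x = pd3 j (fun y => F y j) x := fun j =>
        pd3_congrOn hUo hx (fun y hy => by simp [Ft, hU1 y hy])
      simp only [h, vdiv, Complex.real_smul, Finset.mul_sum, gC]
    · have hgx : g x = 0 := image_eq_zero_of_notMem_tsupport (fun hc => hx (hgsU hc))
      simp [hgx, gC]
  rw [show (fun x => g x • vdiv F x) = fun x => ∑ j : Fin 3, gC x * pd3 j (Ft j) x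
    from funext hpt]
  rw [integral_finset_sum (f := fun j x => gC x * pd3 j (Ft j) x) _ (fun j _ =>
    (hgC1.continuous.mul (continuous_pd3 (hFt1 j))).integrable_of_hasCompactSupport
      hgCcs.mul_right)]
  have h2 : ∀ j : Fin 3, ∫ x, gC x * pd3 j (Ft j) x = - ∫ x, pd3 j gC x * Ft j x :=
    fun j => ibp j hgC1 (hFt1 j) hgCcs
  simp only [h2]
  have h3 : ∀ j : Fin 3, ∀ x, pd3 j gC x * Ft j x
      = pd3 j gC x * vcurl (fun y i => Ht i y) x j := by
    intro j x
    by_cases hx : x ∈ U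
    · have hpd : ∀ (a c : Fin 3), pd3 a (fun y => Ht c y) x = pd3 a (fun y => H y c) x :=
        fun a c => pd3_congrOn hUo hx (fun y hy => by simp [Ht, hU1 y hy])
      have hcurl : vcurl (fun y i => Ht i y) x = vcurl H x := by
        unfold vcurl
        simp only [hpd]
      rw [hcurl]
      have h : Ft j x = F x j := by simp [Ft, hU1 x hx]
      rw [h, hFH x (hUΩ hx)]
    · rw [pd3_eq_zero_of_nmem (fun hc => hx (hgsU (hgCsupp hc))), zero_mul, zero_mul]
  have h4 : ∀ j : Fin 3, (∫ x, pd3 j gC x * Ft j x)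
      = ∫ x, pd3 j gC x * vcurl (fun y i => Ht i y) x j := fun j =>
    integral_congr_ae (.of_forall (h3 j))
  simp only [h4]
  rw [Finset.sum_neg_distrib, curl_ibp hgC hgCcs hHt1 hHtcs, neg_zero]

lemma cross3_curl (F : V3 → Fin 3 → ℂ) (x : V3) (k i : Fin 3) :
    cross3 (e3 k) (vcurl F x) i = pd3 i (fun y => F y k) x - pd3 k (fun y => F y i) x := by
  fin_cases k <;> fin_cases i <;>
    simp [cross3, e3, vcurl, Pi.single_apply] <;> ring

lemma e3_dot (c : ℂ) (k : Fin 3) (g : Fin 3 → ℂ) :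
    (c • e3 k) ⬝ᵥ g = c * g k := by
  fin_cases k <;> simp [e3, dotProduct, Fin.sum_univ_three, Pi.single_apply]

end Helpers

/-- Interior very weak identity (2.2) for the components of the electric field, tested against
compactly supported C² test functions. -/
theorem stmt_2
    (Ω : Set (Fin 3 → ℝ)) (hΩ : IsOpen Ω) (ω : ℂ) (hω : ω ≠ 0)
    (ε μ : (Fin 3 → ℝ) → Matrix (Fin 3) (Fin 3) ℂ)
    (E H Je Jm : (Fin 3 → ℝ) → Fin 3 → ℂ)
    (hε : ∀ i j, ContDiffOn ℝ 1 (fun x => ε x i j) Ω)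
    (hμ : ∀ i j, ContDiffOn ℝ 1 (fun x => μ x i j) Ω)
    (hE : ContDiffOn ℝ 1 E Ω) (hH : ContDiffOn ℝ 1 H Ω)
    (hJe : ContDiffOn ℝ 1 Je Ω) (hJm : ContinuousOn Jm Ω)
    (hM1 : ∀ x ∈ Ω, vcurl H x = (Complex.I * ω) • (ε x *ᵥ E x) + Je x)
    (hM2 : ∀ x ∈ Ω, vcurl E x = -((Complex.I * ω) • (μ x *ᵥ H x)) + Jm x) :
    ∀ k : Fin 3, ∀ φ : (Fin 3 → ℝ) → ℂ,
      ContDiff ℝ 2 φ → HasCompactSupport φ → tsupport φ ⊆ Ω →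
      ∫ x in Ω, E x k *
          vdiv (fun y => (ε y)ᵀ *ᵥ grad3 (fun z => (starRingEnd ℂ) (φ z)) y) x
        = ∫ x in Ω,
            (mpd3 k ε x *ᵥ E x
              - ε x *ᵥ cross3 (e3 k) (Jm x - (Complex.I * ω) • (μ x *ᵥ H x))
              - ((Complex.I / ω) * vdiv Je x) • e3 k)
            ⬝ᵥ grad3 (fun z => (starRingEnd ℂ) (φ z)) x := by
  intro k φ hφ hφcs hφΩ
  have hne : Complex.I * ω ≠ 0 := mul_ne_zero Complex.I_ne_zero hω
  set ψ : V3 → ℂ := fun z => (starRingEnd ℂ) (φ z) with hψdef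
  have hψ : ContDiff ℝ 2 ψ := Complex.conjCLE.contDiff.comp hφ
  have hψcs : HasCompactSupport ψ := hφcs.comp_left (map_zero _)
  have hψK : tsupport ψ ⊆ tsupport φ :=
    closure_mono (Function.support_comp_subset (map_zero _) φ)
  obtain ⟨χ, hχ, hχcs, hχΩ, U, hUo, hKU, hUΩ, hU1⟩ := exists_cutoff hφcs hΩ hφΩ
  -- cut-off versions of the fields
  set εt : Fin 3 → Fin 3 → V3 → ℂ := fun a b x => χ x • ε x a b with hεtdef
  set Et : Fin 3 → V3 → ℂ := fun i x => χ x • E x i with hEtdef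
  have hEcomp : ∀ i, ContDiffOn ℝ 1 (fun x => E x i) Ω := fun i => (contDiffOn_pi.mp hE) i
  have hHcomp : ∀ i, ContDiffOn ℝ 1 (fun x => H x i) Ω := fun i => (contDiffOn_pi.mp hH) i
  have hJecomp : ∀ i, ContDiffOn ℝ 1 (fun x => Je x i) Ω := fun i => (contDiffOn_pi.mp hJe) i
  have hεt1 : ∀ a b, ContDiff ℝ 1 (εt a b) := fun a b => cutoff_smul hΩ hχ hχΩ (hε a b)
  have hEt1 : ∀ i, ContDiff ℝ 1 (Et i) := fun i => cutoff_smul hΩ hχ hχΩ (hEcomp i)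
  have hεtcs : ∀ a b, HasCompactSupport (εt a b) := fun a b => cutoff_cs hχcs
  have hEtcs : ∀ i, HasCompactSupport (Et i) := fun i => cutoff_cs hχcs
  -- facts about ψ and its partial derivatives
  have hψ1 : ContDiff ℝ 1 ψ := hψ.of_le one_le_two
  have hgj1 : ∀ j : Fin 3, ContDiff ℝ 1 (pd3 j ψ) := fun j => contDiff_pd3 hψ
  have hgjcs : ∀ j : Fin 3, HasCompactSupport (pd3 j ψ) := fun j => hcs_pd3 hψcs
  have hgj0 : ∀ (j : Fin 3) (x : V3), x ∉ tsupport φ → pd3 j ψ x = 0 := fun j x hx =>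
    pd3_eq_zero_of_nmem (fun hc => hx (hψK hc))
  have hKc : IsOpen (tsupport φ)ᶜ := (isClosed_tsupport φ).isOpen_compl
  -- auxiliary global fields
  set G : Fin 3 → V3 → ℂ := fun i x => ∑ j : Fin 3, εt j i x * pd3 j ψ x with hGdef
  set W : Fin 3 → V3 → ℂ := fun j x => ∑ i : Fin 3, εt j i x * Et i x with hWdef
  set Cr : Fin 3 → V3 → ℂ := fun i x => pd3 i (Et k) x - pd3 k (Et i) x with hCrdef
  have hG1 : ∀ i, ContDiff ℝ 1 (G i) := fun i =>
    ContDiff.sum (fun j _ => (hεt1 j i).mul (hgj1 j))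
  have hW1 : ∀ j, ContDiff ℝ 1 (W j) := fun j =>
    ContDiff.sum (fun i _ => (hεt1 j i).mul (hEt1 i))
  have hWcs : ∀ j, HasCompactSupport (W j) := fun j => HasCompactSupport.intro hχcs
    (fun x hx => by
      have h0 : χ x = 0 := image_eq_zero_of_notMem_tsupport hx
      simp [hWdef, hεtdef, h0])
  have hGcs : ∀ i, HasCompactSupport (G i) := fun i => HasCompactSupport.intro hχcs
    (fun x hx => by
      have h0 : χ x = 0 := image_eq_zero_of_notMem_tsupport hx
      simp [hGdef, hεtdef, h0])
  have hCrcont : ∀ i, Continuous (Cr i) := fun i =>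
    (continuous_pd3 (hEt1 k)).sub (continuous_pd3 (hEt1 i))
  -- Step L : from the set integral over Ω to an integral of cut-off fields over ℝ³
  have hvan1 : ∀ x ∉ tsupport φ, ∀ i : Fin 3,
      pd3 i (fun y => ((ε y)ᵀ *ᵥ grad3 ψ y) i) x = 0 := by
    intro x hx i
    refine pd3_zero_on hKc hx (fun y hy => ?_)
    have h0 : ∀ j : Fin 3, pd3 j ψ y = 0 := fun j => hgj0 j y hy
    simp [Matrix.mulVec, dotProduct, grad3, h0]
  have hvan2 : ∀ x ∉ tsupport φ, ∀ i : Fin 3, pd3 i (G i) x = 0 := by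
    intro x hx i
    refine pd3_zero_on hKc hx (fun y hy => ?_)
    simp [hGdef, hgj0 _ y hy]
  have hLbig : ∀ x, E x k * vdiv (fun y => (ε y)ᵀ *ᵥ grad3 ψ y) x
      = Et k x * ∑ i : Fin 3, pd3 i (G i) x := by
    intro x
    by_cases hx : x ∈ U
    · have hEtk : Et k x = E x k := by simp [hEtdef, hU1 x hx]
      have hpd : ∀ i : Fin 3, pd3 i (fun y => ((ε y)ᵀ *ᵥ grad3 ψ y) i) x = pd3 i (G i) x :=
        fun i => pd3_congrOn hUo hx (fun y hy => by
          simp [Matrix.mulVec, dotProduct, Matrix.transpose_apply, grad3, hGdef,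
            hεtdef, hU1 y hy])
      rw [hEtk]
      simp only [vdiv]
      exact congrArg _ (Finset.sum_congr rfl (fun i _ => hpd i))
    · have hx' : x ∉ tsupport φ := fun hc => hx (hKU hc)
      simp only [vdiv]
      rw [Finset.sum_congr rfl (fun i _ => hvan1 x hx' i),
        Finset.sum_congr rfl (fun i _ => hvan2 x hx' i)]
      simp
  have stepL : (∫ x in Ω, E x k * vdiv (fun y => (ε y)ᵀ *ᵥ grad3 ψ y) x)
      = ∫ x, Et k x * ∑ i : Fin 3, pd3 i (G i) x := by
    rw [setIntegral_eq_integral_of_forall_compl_eq_zero (fun x hx => ?_)]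
    · exact integral_congr_ae (.of_forall hLbig)
    · have hx' : x ∉ tsupport φ := fun hc => hx (hφΩ hc)
      simp only [vdiv]
      rw [Finset.sum_congr rfl (fun i _ => hvan1 x hx' i)]
      simp
  -- the three target integrands (with cut-off fields)
  set A1 : V3 → ℂ := fun x => ∑ j : Fin 3, (∑ i : Fin 3, pd3 k (εt j i) x * Et i x) * pd3 j ψ x
    with hA1def
  set A2 : V3 → ℂ := fun x => ∑ i : Fin 3, Cr i x * G i x with hA2def
  set A3 : V3 → ℂ := fun x => (∑ j : Fin 3, pd3 j (W j) x) * pd3 k ψ x with hA3def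
  -- integrability facts
  have hInt1 : ∀ i : Fin 3, Integrable (fun x => Et k x * pd3 i (G i) x) := fun i =>
    ((hEt1 k).continuous.mul (continuous_pd3 (hG1 i))).integrable_of_hasCompactSupport
      (hEtcs k).mul_right
  have hIntP : ∀ i : Fin 3, Integrable (fun x => pd3 k (Et i) x * G i x) := fun i =>
    ((continuous_pd3 (hEt1 i)).mul (hG1 i).continuous).integrable_of_hasCompactSupport
      (hcs_pd3 (hEtcs i)).mul_right
  have hIntQ : ∀ i : Fin 3, Integrable (fun x => Cr i x * G i x) := fun i =>
    ((hCrcont i).mul (hG1 i).continuous).integrable_of_hasCompactSupport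
      (hGcs i).mul_left
  have hIntA : ∀ (i j : Fin 3),
      Integrable (fun x => pd3 k (fun y => εt j i y * Et i y) x * pd3 j ψ x) := fun i j =>
    ((continuous_pd3 ((hεt1 j i).mul (hEt1 i))).mul
      (continuous_pd3 hψ1)).integrable_of_hasCompactSupport (hgjcs j).mul_left
  have hIntB : ∀ (i j : Fin 3),
      Integrable (fun x => pd3 k (εt j i) x * Et i x * pd3 j ψ x) := fun i j =>
    (((continuous_pd3 (hεt1 j i)).mul (hEt1 i).continuous).mul
      (continuous_pd3 hψ1)).integrable_of_hasCompactSupport (hgjcs j).mul_left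
  have hIntW : ∀ j : Fin 3, Integrable (fun x => pd3 j (W j) x * pd3 k ψ x) := fun j =>
    ((continuous_pd3 (hW1 j)).mul (continuous_pd3 hψ1)).integrable_of_hasCompactSupport
      (hcs_pd3 (hWcs j)).mul_right
  have hIntA1 : ∀ j : Fin 3,
      Integrable (fun x => (∑ i : Fin 3, pd3 k (εt j i) x * Et i x) * pd3 j ψ x) := fun j =>
    ((continuous_finset_sum _ (fun i _ => (continuous_pd3 (hεt1 j i)).mul
      (hEt1 i).continuous)).mul (continuous_pd3 hψ1)).integrable_of_hasCompactSupport
      (hgjcs j).mul_left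
  -- step 1 : first integration by parts
  have step1 : (∫ x, Et k x * ∑ i : Fin 3, pd3 i (G i) x)
      = ∑ i : Fin 3, - ∫ x, pd3 i (Et k) x * G i x := by
    rw [show (fun x => Et k x * ∑ i : Fin 3, pd3 i (G i) x)
        = fun x => ∑ i : Fin 3, Et k x * pd3 i (G i) x
        from funext fun x => Finset.mul_sum _ _ _,
      integral_finset_sum _ (fun i _ => hInt1 i)]
    exact Finset.sum_congr rfl (fun i _ => ibp i (hEt1 k) (hG1 i) (hEtcs k))
  -- step 2 : algebraic decomposition of ∂ᵢ(Et k) via the curl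
  have step2 : ∀ i : Fin 3, (∫ x, pd3 i (Et k) x * G i x)
      = (∫ x, pd3 k (Et i) x * G i x) + ∫ x, Cr i x * G i x := by
    intro i
    rw [← integral_add (hIntP i) (hIntQ i)]
    refine integral_congr_ae (.of_forall fun x => ?_)
    simp only [hCrdef]
    ring
  -- step 3 : product rule
  have hdiffεt : ∀ a b (x : V3), DifferentiableAt ℝ (εt a b) x := fun a b x =>
    ((hεt1 a b).differentiable one_ne_zero) x
  have hdiffEt : ∀ i (x : V3), DifferentiableAt ℝ (Et i) x := fun i x =>
    ((hEt1 i).differentiable one_ne_zero) x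
  have hprod : ∀ (i j : Fin 3) (x : V3), pd3 k (fun y => εt j i y * Et i y) x
      = εt j i x * pd3 k (Et i) x + pd3 k (εt j i) x * Et i x := fun i j x =>
    pd3_mul (hdiffεt j i x) (hdiffEt i x)
  have hsplitP : ∀ i : Fin 3, ∀ x : V3, pd3 k (Et i) x * G i x
      = (∑ j : Fin 3, pd3 k (fun y => εt j i y * Et i y) x * pd3 j ψ x)
        - ∑ j : Fin 3, pd3 k (εt j i) x * Et i x * pd3 j ψ x := by
    intro i x
    rw [← Finset.sum_sub_distrib]
    simp only [hGdef]
    rw [Finset.mul_sum]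
    refine Finset.sum_congr rfl (fun j _ => ?_)
    rw [hprod i j x]
    ring
  have step3a : ∀ i : Fin 3, (∫ x, pd3 k (Et i) x * G i x)
      = (∑ j : Fin 3, ∫ x, pd3 k (fun y => εt j i y * Et i y) x * pd3 j ψ x)
        - ∑ j : Fin 3, ∫ x, pd3 k (εt j i) x * Et i x * pd3 j ψ x := by
    intro i
    rw [show (fun x => pd3 k (Et i) x * G i x) = fun x =>
        (∑ j : Fin 3, pd3 k (fun y => εt j i y * Et i y) x * pd3 j ψ x)
        - ∑ j : Fin 3, pd3 k (εt j i) x * Et i x * pd3 j ψ x from funext (hsplitP i),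
      integral_sub (integrable_finset_sum _ (fun j _ => hIntA i j))
        (integrable_finset_sum _ (fun j _ => hIntB i j)),
      integral_finset_sum _ (fun j _ => hIntA i j),
      integral_finset_sum _ (fun j _ => hIntB i j)]
  -- the W-part
  have hWpd : ∀ (j : Fin 3) (x : V3), pd3 k (W j) x
      = ∑ i : Fin 3, pd3 k (fun y => εt j i y * Et i y) x := by
    intro j x
    simp only [hWdef]
    exact pd3_sum (fun i => (hdiffεt j i x).mul (hdiffEt i x))
  have stepW1 : (∑ i : Fin 3, ∑ j : Fin 3,
        ∫ x, pd3 k (fun y => εt j i y * Et i y) x * pd3 j ψ x)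
      = ∑ j : Fin 3, ∫ x, pd3 k (W j) x * pd3 j ψ x := by
    rw [Finset.sum_comm]
    refine Finset.sum_congr rfl (fun j _ => ?_)
    rw [← integral_finset_sum _ (fun i _ => hIntA i j)]
    refine integral_congr_ae (.of_forall fun x => ?_)
    show _ = pd3 k (W j) x * pd3 j ψ x
    rw [hWpd j x, Finset.sum_mul]
  have stepW2 : ∀ j : Fin 3, (∫ x, pd3 k (W j) x * pd3 j ψ x)
      = ∫ x, pd3 j (W j) x * pd3 k ψ x := by
    intro j
    have h1 := ibp k (hW1 j) (hgj1 j) (hWcs j)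
    have h2 := ibp j (hW1 j) (hgj1 k) (hWcs j)
    have h3 : (∫ x, W j x * pd3 k (pd3 j ψ) x) = ∫ x, W j x * pd3 j (pd3 k ψ) x :=
      integral_congr_ae (.of_forall fun x => by
        show W j x * pd3 k (pd3 j ψ) x = W j x * pd3 j (pd3 k ψ) x
        rw [pd3_comm hψ k j])
    have h4 : (∫ x, pd3 k (W j) x * pd3 j ψ x) = - ∫ x, W j x * pd3 k (pd3 j ψ) x := by
      rw [h1, neg_neg]
    rw [h4, h3, h2, neg_neg]
  have stepW3 : (∑ j : Fin 3, ∫ x, pd3 j (W j) x * pd3 k ψ x) = ∫ x, A3 x := by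
    rw [← integral_finset_sum _ (fun j _ => hIntW j)]
    exact integral_congr_ae (.of_forall fun x => (Finset.sum_mul _ _ _).symm)
  have stepAswap : (∑ i : Fin 3, ∑ j : Fin 3,
        ∫ x, pd3 k (fun y => εt j i y * Et i y) x * pd3 j ψ x) = ∫ x, A3 x := by
    rw [stepW1, Finset.sum_congr rfl (fun j _ => stepW2 j), stepW3]
  -- the B-part
  have stepB1 : ∀ j : Fin 3, (∑ i : Fin 3, ∫ x, pd3 k (εt j i) x * Et i x * pd3 j ψ x)
      = ∫ x, (∑ i : Fin 3, pd3 k (εt j i) x * Et i x) * pd3 j ψ x := by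
    intro j
    rw [← integral_finset_sum _ (fun i _ => hIntB i j)]
    exact integral_congr_ae (.of_forall fun x => (Finset.sum_mul _ _ _).symm)
  have stepBswap : (∑ i : Fin 3, ∑ j : Fin 3,
        ∫ x, pd3 k (εt j i) x * Et i x * pd3 j ψ x) = ∫ x, A1 x := by
    rw [Finset.sum_comm, Finset.sum_congr rfl (fun j _ => stepB1 j),
      ← integral_finset_sum _ (fun j _ => hIntA1 j)]
  have stepC : (∑ i : Fin 3, ∫ x, Cr i x * G i x) = ∫ x, A2 x :=
    (integral_finset_sum _ (fun i _ => hIntQ i)).symm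
  -- key computation
  have key : (∑ i : Fin 3, - ∫ x, pd3 i (Et k) x * G i x)
      = (∫ x, A1 x) - (∫ x, A2 x) - ∫ x, A3 x := by
    calc (∑ i : Fin 3, - ∫ x, pd3 i (Et k) x * G i x)
        = ∑ i : Fin 3,
            (-(((∑ j : Fin 3, ∫ x, pd3 k (fun y => εt j i y * Et i y) x * pd3 j ψ x)
              - ∑ j : Fin 3, ∫ x, pd3 k (εt j i) x * Et i x * pd3 j ψ x))
            - ∫ x, Cr i x * G i x) := by
          refine Finset.sum_congr rfl (fun i _ => ?_)
          rw [step2 i, step3a i]; ring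
      _ = -((∑ i : Fin 3, ∑ j : Fin 3,
              ∫ x, pd3 k (fun y => εt j i y * Et i y) x * pd3 j ψ x)
            - ∑ i : Fin 3, ∑ j : Fin 3, ∫ x, pd3 k (εt j i) x * Et i x * pd3 j ψ x)
            - ∑ i : Fin 3, ∫ x, Cr i x * G i x := by
          rw [Finset.sum_sub_distrib, Finset.sum_neg_distrib, Finset.sum_sub_distrib]
      _ = -((∫ x, A3 x) - ∫ x, A1 x) - ∫ x, A2 x := by rw [stepAswap, stepBswap, stepC]
      _ = (∫ x, A1 x) - (∫ x, A2 x) - ∫ x, A3 x := by ring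
  -- the divergence identity div (curl H) = 0, in a.e. form
  set Fv : V3 → Fin 3 → ℂ := fun x => (Complex.I * ω) • (ε x *ᵥ E x) + Je x with hFvdef
  have hFcomp : ∀ i, ContDiffOn ℝ 1 (fun x => Fv x i) Ω := by
    intro i
    have h : ContDiffOn ℝ 1
        (fun x => (Complex.I * ω) * (∑ l : Fin 3, ε x i l * E x l) + Je x i) Ω :=
      (contDiffOn_const.mul (ContDiffOn.sum (fun l _ => (hε i l).mul (hEcomp l)))).add
        (hJecomp i)
    exact h
  have hdivF : ∀ᵐ x, x ∈ Ω → vdiv Fv x = 0 :=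
    div_curl_ae hΩ hHcomp hFcomp (fun x hx => (hM1 x hx).symm)
  -- vanishing of the right-hand side integrand off the support of φ
  have hRzero : ∀ x, x ∉ tsupport φ →
      (mpd3 k ε x *ᵥ E x
        - ε x *ᵥ cross3 (e3 k) (Jm x - (Complex.I * ω) • (μ x *ᵥ H x))
        - ((Complex.I / ω) * vdiv Je x) • e3 k) ⬝ᵥ grad3 ψ x = 0 := by
    intro x hx
    have h0 : grad3 ψ x = 0 := funext (fun j => hgj0 j x hx)
    rw [h0, dotProduct_zero]
  -- the main a.e. identification of the integrands
  have hmain : ∀ᵐ x, A1 x - A2 x - A3 x =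
      (mpd3 k ε x *ᵥ E x
        - ε x *ᵥ cross3 (e3 k) (Jm x - (Complex.I * ω) • (μ x *ᵥ H x))
        - ((Complex.I / ω) * vdiv Je x) • e3 k) ⬝ᵥ grad3 ψ x := by
    filter_upwards [hdivF] with x hx0
    by_cases hx : x ∈ U
    · have hxΩ : x ∈ Ω := hUΩ hx
      -- the first piece
      have hA1 : A1 x = (mpd3 k ε x *ᵥ E x) ⬝ᵥ grad3 ψ x := by
        rw [hA1def]
        show ∑ j : Fin 3, _ = ∑ j : Fin 3, (mpd3 k ε x *ᵥ E x) j * pd3 j ψ x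
        refine Finset.sum_congr rfl (fun j _ => ?_)
        congr 1
        show _ = ∑ i : Fin 3, pd3 k (fun y => ε y j i) x * E x i
        refine Finset.sum_congr rfl (fun i _ => ?_)
        rw [pd3_congrOn hUo hx (f := εt j i) (g := fun y => ε y j i)
          (fun y hy => by simp [hεtdef, hU1 y hy])]
        congr 1
        simp [hEtdef, hU1 x hx]
      -- the second piece
      have hcr : ∀ i : Fin 3,
          Cr i x = cross3 (e3 k) (Jm x - (Complex.I * ω) • (μ x *ᵥ H x)) i := by
        intro i
        have h2 : Jm x - (Complex.I * ω) • (μ x *ᵥ H x) = vcurl E x := by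
          rw [hM2 x hxΩ, sub_eq_neg_add]
        rw [h2, cross3_curl E x k i, hCrdef]
        show pd3 i (Et k) x - pd3 k (Et i) x = _
        rw [pd3_congrOn hUo hx (f := Et k) (g := fun y => E y k)
            (fun y hy => by simp [hEtdef, hU1 y hy]),
          pd3_congrOn hUo hx (f := Et i) (g := fun y => E y i)
            (fun y hy => by simp [hEtdef, hU1 y hy])]
      have hGx : ∀ i : Fin 3, G i x = ∑ j : Fin 3, ε x j i * pd3 j ψ x := by
        intro i
        refine Finset.sum_congr rfl (fun j _ => ?_)
        congr 1
        simp [hεtdef, hU1 x hx]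
      have hA2 : A2 x = (ε x *ᵥ cross3 (e3 k)
          (Jm x - (Complex.I * ω) • (μ x *ᵥ H x))) ⬝ᵥ grad3 ψ x := by
        rw [hA2def]
        show ∑ i : Fin 3, Cr i x * G i x = _
        calc ∑ i : Fin 3, Cr i x * G i x
            = ∑ i : Fin 3, ∑ j : Fin 3, (ε x j i * Cr i x) * pd3 j ψ x := by
              refine Finset.sum_congr rfl (fun i _ => ?_)
              rw [hGx i, Finset.mul_sum]
              exact Finset.sum_congr rfl (fun j _ => by ring)
          _ = ∑ j : Fin 3, ∑ i : Fin 3, (ε x j i * Cr i x) * pd3 j ψ x := Finset.sum_comm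
          _ = (ε x *ᵥ cross3 (e3 k)
              (Jm x - (Complex.I * ω) • (μ x *ᵥ H x))) ⬝ᵥ grad3 ψ x := by
              show _ = ∑ j : Fin 3, (ε x *ᵥ cross3 (e3 k)
                (Jm x - (Complex.I * ω) • (μ x *ᵥ H x))) j * pd3 j ψ x
              refine Finset.sum_congr rfl (fun j _ => ?_)
              rw [← Finset.sum_mul]
              congr 1
              show _ = ∑ i : Fin 3, ε x j i
                * cross3 (e3 k) (Jm x - (Complex.I * ω) • (μ x *ᵥ H x)) i
              exact Finset.sum_congr rfl (fun i _ => by rw [hcr i])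
      -- the third piece
      have hdFv : ∀ j : Fin 3, DifferentiableAt ℝ (fun y => Fv y j) x := fun j =>
        ((hFcomp j).differentiableOn one_ne_zero).differentiableAt (hΩ.mem_nhds hxΩ)
      have hdJe : ∀ j : Fin 3, DifferentiableAt ℝ (fun y => Je y j) x := fun j =>
        ((hJecomp j).differentiableOn one_ne_zero).differentiableAt (hΩ.mem_nhds hxΩ)
      have hWj : ∀ j : Fin 3, pd3 j (W j) x
          = (Complex.I * ω)⁻¹ * (pd3 j (fun y => Fv y j) x - pd3 j (fun y => Je y j) x) := by
        intro j
        have hcong : pd3 j (W j) x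
            = pd3 j (fun y => (Complex.I * ω)⁻¹ * (Fv y j - Je y j)) x := by
          refine pd3_congrOn hUo hx (fun y hy => ?_)
          have hFvj : Fv y j
              = (Complex.I * ω) * (∑ i : Fin 3, ε y j i * E y i) + Je y j := rfl
          have hWy : W j y = ∑ i : Fin 3, ε y j i * E y i := by
            refine Finset.sum_congr rfl (fun i _ => ?_)
            simp [hεtdef, hEtdef, hU1 y hy]
          rw [hWy, hFvj, add_sub_cancel_right, inv_mul_cancel_left₀ hne]
        rw [hcong, pd3_const_mul (f := fun y => Fv y j - Je y j) ((hdFv j).sub (hdJe j)) _, pd3_sub (hdFv j) (hdJe j)]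
      have hW3 : (∑ j : Fin 3, pd3 j (W j) x) = (Complex.I / ω) * vdiv Je x := by
        have hsum : (∑ j : Fin 3, pd3 j (W j) x)
            = (Complex.I * ω)⁻¹ * (vdiv Fv x - vdiv Je x) := by
          simp only [hWj]
          rw [← Finset.mul_sum, Finset.sum_sub_distrib]
          rfl
        rw [hsum, hx0 hxΩ, zero_sub, show ((Complex.I * ω)⁻¹ * -(vdiv Je x))
          = (-(Complex.I * ω)⁻¹) * vdiv Je x from by ring]
        congr 1
        rw [mul_inv, Complex.inv_I, div_eq_mul_inv]
        ring
      have hA3 : A3 x = (((Complex.I / ω) * vdiv Je x) • e3 k) ⬝ᵥ grad3 ψ x := by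
        rw [hA3def, e3_dot]
        show (∑ j : Fin 3, pd3 j (W j) x) * pd3 k ψ x = _
        rw [hW3]
        rfl
      rw [sub_dotProduct, sub_dotProduct, hA1, hA2, hA3]
    · have hx' : x ∉ tsupport φ := fun hc => hx (hKU hc)
      rw [hRzero x hx']
      have hz : ∀ j : Fin 3, pd3 j ψ x = 0 := fun j => hgj0 j x hx'
      have hGz : ∀ i : Fin 3, G i x = 0 := fun i => by
        rw [hGdef]
        show ∑ j : Fin 3, εt j i x * pd3 j ψ x = 0
        simp [hz]
      have h1 : A1 x = 0 := by
        rw [hA1def]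
        show ∑ j : Fin 3, (∑ i : Fin 3, pd3 k (εt j i) x * Et i x) * pd3 j ψ x = 0
        simp [hz]
      have h2 : A2 x = 0 := by
        rw [hA2def]
        show ∑ i : Fin 3, Cr i x * G i x = 0
        simp [hGz]
      have h3 : A3 x = 0 := by
        rw [hA3def]
        show (∑ j : Fin 3, pd3 j (W j) x) * pd3 k ψ x = 0
        rw [hz k, mul_zero]
      rw [h1, h2, h3]
      ring
  -- integrability of the three pieces and final assembly
  have hIntA1' : Integrable A1 := integrable_finset_sum _ (fun j _ => hIntA1 j)
  have hIntA2' : Integrable A2 := integrable_finset_sum _ (fun i _ => hIntQ i)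
  have hIntA3' : Integrable A3 :=
    ((continuous_finset_sum _ (fun j _ => continuous_pd3 (hW1 j))).mul
      (continuous_pd3 hψ1)).integrable_of_hasCompactSupport (hgjcs k).mul_left
  have comb : (∫ x, A1 x) - (∫ x, A2 x) - (∫ x, A3 x) = ∫ x, (A1 x - A2 x - A3 x) := by
    have h12 : Integrable (fun x => A1 x - A2 x) := hIntA1'.sub hIntA2'
    rw [← integral_sub hIntA1' hIntA2', ← integral_sub h12 hIntA3']
  have final : (∫ x, (A1 x - A2 x - A3 x)) = ∫ x in Ω,
      (mpd3 k ε x *ᵥ E x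
        - ε x *ᵥ cross3 (e3 k) (Jm x - (Complex.I * ω) • (μ x *ᵥ H x))
        - ((Complex.I / ω) * vdiv Je x) • e3 k) ⬝ᵥ grad3 ψ x := by
    rw [setIntegral_eq_integral_of_forall_compl_eq_zero
      (fun x hx => hRzero x (fun hc => hx (hφΩ hc)))]
    exact integral_congr_ae hmain
  rw [stepL, step1, key, comb, final]
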